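/- Let k = 2r with r ≥ 0 and let w(t) = (1, cos t, sin t, cos 2t, sin 2t, …, cos rt, sin rt) ∈ ℝ^{k+1}. Then for all real numbers a_1 ≤ a_2 ≤ … ≤ a_k with a_k ≤ a_1 + 2π, setting a_0 = a_k − 2π, the alternating sum of integrals ∑_{s=0}^{k-1} (-1)^s ∫_{a_s}^{a_{s+1}} w(t) dt is nonzero. -/

import Mathlib

/-- The trigonometric moment curve `w(t) = (1, cos t, sin t, …, cos rt, sin rt)` in
`ℝ^{2r+1}`, written with coordinates indexed by `Fin (k+1)`, `k = 2r`. -/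
noncomputable def trigMomentCurve (k : ℕ) : ℝ → (Fin (k + 1) → ℝ) := fun t i =>
  if (i : ℕ) = 0 then 1
  else if (i : ℕ) % 2 = 1 then Real.cos (((((i : ℕ) + 1) / 2 : ℕ) : ℝ) * t)
  else Real.sin ((((i : ℕ) / 2 : ℕ) : ℝ) * t)

namespace Stmt4Aux

/-- Trig polynomials of degree at most `n`, as a span. -/
def T (n : ℕ) : Submodule ℝ (ℝ → ℝ) :=
  Submodule.span ℝ {f : ℝ → ℝ | ∃ m : ℕ, m ≤ n ∧
    (f = (fun t => Real.cos (m * t)) ∨ f = fun t => Real.sin (m * t))}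

lemma cos_mem {n m : ℕ} (h : m ≤ n) : (fun t => Real.cos (m * t)) ∈ T n :=
  Submodule.subset_span ⟨m, h, Or.inl rfl⟩

lemma sin_mem {n m : ℕ} (h : m ≤ n) : (fun t => Real.sin (m * t)) ∈ T n :=
  Submodule.subset_span ⟨m, h, Or.inr rfl⟩

lemma T_mono {n : ℕ} : T n ≤ T (n + 1) :=
  Submodule.span_mono (fun f ⟨m, hm, h⟩ => ⟨m, hm.trans n.le_succ, h⟩)

lemma mul_cos_mem {n : ℕ} {f : ℝ → ℝ} (hf : f ∈ T n) :
    (fun t => f t * Real.cos t) ∈ T (n + 1) := by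
  induction hf using Submodule.span_induction with
  | mem g hg =>
    obtain ⟨m, hm, hg | hg⟩ := hg <;> subst hg
    · rcases m with _ | m
      · have e : (fun t => Real.cos (((0:ℕ):ℝ) * t) * Real.cos t)
            = fun t => Real.cos (((1:ℕ):ℝ) * t) := by
          funext t; push_cast; simp
        rw [e]; exact cos_mem (by omega)
      · have e : (fun t => Real.cos (((m+1:ℕ):ℝ) * t) * Real.cos t)
            = (1/2 : ℝ) • (fun t => Real.cos (((m+2:ℕ):ℝ) * t))
              + (1/2 : ℝ) • fun t => Real.cos (((m:ℕ):ℝ) * t) := by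
          funext t
          show _ = (1/2:ℝ) * Real.cos (((m+2:ℕ):ℝ) * t) + (1/2:ℝ) * Real.cos (((m:ℕ):ℝ) * t)
          push_cast
          rw [show ((m:ℝ)+2)*t = (((m:ℝ)+1)*t + t) by ring,
            show (m:ℝ)*t = (((m:ℝ)+1)*t - t) by ring, Real.cos_add, Real.cos_sub]
          ring
        rw [e]
        exact add_mem (Submodule.smul_mem _ _ (cos_mem (by omega)))
          (Submodule.smul_mem _ _ (cos_mem (by omega)))
    · rcases m with _ | m
      · have e : (fun t => Real.sin (((0:ℕ):ℝ) * t) * Real.cos t) = (0 : ℝ → ℝ) := by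
          funext t; push_cast; simp
        rw [e]; exact zero_mem _
      · have e : (fun t => Real.sin (((m+1:ℕ):ℝ) * t) * Real.cos t)
            = (1/2 : ℝ) • (fun t => Real.sin (((m+2:ℕ):ℝ) * t))
              + (1/2 : ℝ) • fun t => Real.sin (((m:ℕ):ℝ) * t) := by
          funext t
          show _ = (1/2:ℝ) * Real.sin (((m+2:ℕ):ℝ) * t) + (1/2:ℝ) * Real.sin (((m:ℕ):ℝ) * t)
          push_cast
          rw [show ((m:ℝ)+2)*t = (((m:ℝ)+1)*t + t) by ring,
            show (m:ℝ)*t = (((m:ℝ)+1)*t - t) by ring, Real.sin_add, Real.sin_sub]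
          ring
        rw [e]
        exact add_mem (Submodule.smul_mem _ _ (sin_mem (by omega)))
          (Submodule.smul_mem _ _ (sin_mem (by omega)))
  | zero =>
    have e : (fun t => (0 : ℝ → ℝ) t * Real.cos t) = (0 : ℝ → ℝ) := by
      funext t; simp
    rw [e]; exact zero_mem _
  | add x y hx hy ihx ihy =>
    have e : (fun t => (x + y) t * Real.cos t)
        = (fun t => x t * Real.cos t) + fun t => y t * Real.cos t := by
      funext t; simp [add_mul]
    rw [e]; exact add_mem ihx ihy
  | smul c x hx ih =>
    have e : (fun t => (c • x) t * Real.cos t) = c • fun t => x t * Real.cos t := by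
      funext t; simp [mul_assoc]
    rw [e]; exact Submodule.smul_mem _ _ ih

lemma mul_sin_mem {n : ℕ} {f : ℝ → ℝ} (hf : f ∈ T n) :
    (fun t => f t * Real.sin t) ∈ T (n + 1) := by
  induction hf using Submodule.span_induction with
  | mem g hg =>
    obtain ⟨m, hm, hg | hg⟩ := hg <;> subst hg
    · rcases m with _ | m
      · have e : (fun t => Real.cos (((0:ℕ):ℝ) * t) * Real.sin t)
            = fun t => Real.sin (((1:ℕ):ℝ) * t) := by
          funext t; push_cast; simp
        rw [e]; exact sin_mem (by omega)
      · have e : (fun t => Real.cos (((m+1:ℕ):ℝ) * t) * Real.sin t)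
            = (1/2 : ℝ) • (fun t => Real.sin (((m+2:ℕ):ℝ) * t))
              + (-(1/2) : ℝ) • fun t => Real.sin (((m:ℕ):ℝ) * t) := by
          funext t
          show _ = (1/2:ℝ) * Real.sin (((m+2:ℕ):ℝ) * t) + (-(1/2):ℝ) * Real.sin (((m:ℕ):ℝ) * t)
          push_cast
          rw [show ((m:ℝ)+2)*t = (((m:ℝ)+1)*t + t) by ring,
            show (m:ℝ)*t = (((m:ℝ)+1)*t - t) by ring, Real.sin_add, Real.sin_sub]
          ring
        rw [e]
        exact add_mem (Submodule.smul_mem _ _ (sin_mem (by omega)))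
          (Submodule.smul_mem _ _ (sin_mem (by omega)))
    · rcases m with _ | m
      · have e : (fun t => Real.sin (((0:ℕ):ℝ) * t) * Real.sin t) = (0 : ℝ → ℝ) := by
          funext t; push_cast; simp
        rw [e]; exact zero_mem _
      · have e : (fun t => Real.sin (((m+1:ℕ):ℝ) * t) * Real.sin t)
            = (1/2 : ℝ) • (fun t => Real.cos (((m:ℕ):ℝ) * t))
              + (-(1/2) : ℝ) • fun t => Real.cos (((m+2:ℕ):ℝ) * t) := by
          funext t
          show _ = (1/2:ℝ) * Real.cos (((m:ℕ):ℝ) * t) + (-(1/2):ℝ) * Real.cos (((m+2:ℕ):ℝ) * t)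
          push_cast
          rw [show ((m:ℝ)+2)*t = (((m:ℝ)+1)*t + t) by ring,
            show (m:ℝ)*t = (((m:ℝ)+1)*t - t) by ring, Real.cos_add, Real.cos_sub]
          ring
        rw [e]
        exact add_mem (Submodule.smul_mem _ _ (cos_mem (by omega)))
          (Submodule.smul_mem _ _ (cos_mem (by omega)))
  | zero =>
    have e : (fun t => (0 : ℝ → ℝ) t * Real.sin t) = (0 : ℝ → ℝ) := by
      funext t; simp
    rw [e]; exact zero_mem _
  | add x y hx hy ihx ihy =>
    have e : (fun t => (x + y) t * Real.sin t)
        = (fun t => x t * Real.sin t) + fun t => y t * Real.sin t := by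
      funext t; simp [add_mul]
    rw [e]; exact add_mem ihx ihy
  | smul c x hx ih =>
    have e : (fun t => (c • x) t * Real.sin t) = c • fun t => x t * Real.sin t := by
      funext t; simp [mul_assoc]
    rw [e]; exact Submodule.smul_mem _ _ ih

lemma mul_deg1_mem {n : ℕ} {f : ℝ → ℝ} (hf : f ∈ T n) (α β γ : ℝ) :
    (fun t => f t * (α + β * Real.cos t + γ * Real.sin t)) ∈ T (n + 1) := by
  have e : (fun t => f t * (α + β * Real.cos t + γ * Real.sin t))
      = α • f + β • (fun t => f t * Real.cos t) + γ • fun t => f t * Real.sin t := by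
    funext t
    show _ = α * f t + β * (f t * Real.cos t) + γ * (f t * Real.sin t)
    ring
  rw [e]
  exact add_mem (add_mem (Submodule.smul_mem _ _ (T_mono hf))
    (Submodule.smul_mem _ _ (mul_cos_mem hf))) (Submodule.smul_mem _ _ (mul_sin_mem hf))

lemma prod_sin_mem (b : ℕ → ℝ) (r : ℕ) :
    (fun t => ∏ j ∈ Finset.range (2 * r), Real.sin ((t - b j) / 2)) ∈ T r := by
  induction r with
  | zero =>
    have e : (fun t : ℝ => ∏ j ∈ Finset.range (2 * 0), Real.sin ((t - b j) / 2))
        = fun t => Real.cos (((0:ℕ):ℝ) * t) := by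
      funext t; simp
    rw [e]; exact cos_mem le_rfl
  | succ r ih =>
    set u := b (2 * r) with hu
    set v := b (2 * r + 1) with hv
    have key : ∀ t : ℝ, Real.sin ((t - u) / 2) * Real.sin ((t - v) / 2)
        = (Real.cos ((v - u)/2) / 2)
          + (-(Real.cos ((u + v)/2)) / 2) * Real.cos t
          + (-(Real.sin ((u + v)/2)) / 2) * Real.sin t := by
      intro t
      have e1 : (v - u)/2 = (t - u)/2 - (t - v)/2 := by ring
      have e2 : t - (u + v)/2 = (t - u)/2 + (t - v)/2 := by ring
      have h1 : Real.cos ((v - u)/2)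
          = Real.cos ((t-u)/2) * Real.cos ((t-v)/2) + Real.sin ((t-u)/2) * Real.sin ((t-v)/2) := by
        rw [e1, Real.cos_sub]
      have h2 : Real.cos (t - (u + v)/2)
          = Real.cos ((t-u)/2) * Real.cos ((t-v)/2) - Real.sin ((t-u)/2) * Real.sin ((t-v)/2) := by
        rw [e2, Real.cos_add]
      have h3 : Real.cos (t - (u + v)/2)
          = Real.cos t * Real.cos ((u+v)/2) + Real.sin t * Real.sin ((u+v)/2) := Real.cos_sub _ _
      linarith
    have e : (fun t : ℝ => ∏ j ∈ Finset.range (2 * (r + 1)), Real.sin ((t - b j) / 2))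
        = fun t => (∏ j ∈ Finset.range (2 * r), Real.sin ((t - b j) / 2)) *
            ((Real.cos ((v - u)/2) / 2)
              + (-(Real.cos ((u + v)/2)) / 2) * Real.cos t
              + (-(Real.sin ((u + v)/2)) / 2) * Real.sin t) := by
      funext t
      rw [show 2 * (r + 1) = 2 * r + 1 + 1 by ring, Finset.prod_range_succ,
        Finset.prod_range_succ, mul_assoc, key t]
    rw [e]
    exact mul_deg1_mem ih _ _ _

end Stmt4Aux

open Stmt4Aux in
/-- For `k = 2r`, `w` the trigonometric moment curve in `ℝ^{k+1}`, and any
weakly increasing `a_1 ≤ … ≤ a_k` with `a_k ≤ a_1 + 2π` and `a_0 = a_k − 2π`, the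
alternating sum `∑_{s=0}^{k-1} (-1)^s ∫_{a_s}^{a_{s+1}} w(t) dt` is nonzero. -/
theorem stmt4 (r : ℕ) (k : ℕ) (hk : k = 2 * r)
    (a : ℕ → ℝ)
    (hmono : ∀ s, 1 ≤ s → s < k → a s ≤ a (s + 1))
    (hlen : a k ≤ a 1 + 2 * Real.pi)
    (h0 : a 0 = a k - 2 * Real.pi) :
    (∑ s ∈ Finset.range k,
        ((-1 : ℝ) ^ s) • (∫ t in (a s)..(a (s + 1)), trigMomentCurve k t)) ≠ 0 := by
  intro hS
  have hpi := Real.pi_pos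
  -- monotonicity
  have ha : ∀ i j : ℕ, 1 ≤ i → i ≤ j → j ≤ k → a i ≤ a j := by
    intro i j hi hij hj
    induction j with
    | zero => omega
    | succ n ih =>
      rcases Nat.lt_or_ge i (n + 1) with h | h
      · exact (ih (by omega) (by omega)).trans (hmono n (by omega) (by omega))
      · have : i = n + 1 := by omega
        rw [this]
  have hstep : ∀ s, s < k → a s ≤ a (s + 1) := by
    intro s hs
    rcases Nat.eq_zero_or_pos s with rfl | hs1
    · rw [h0]
      have : a 1 ≤ a 1 := le_rfl
      linarith [hlen]
    · exact hmono s hs1 hs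
  have hlow : ∀ s, s ≤ k → a k - 2 * Real.pi ≤ a s := by
    intro s hs
    rcases Nat.eq_zero_or_pos s with rfl | hs1
    · rw [← h0]
    · have := ha 1 s le_rfl hs1 hs
      linarith [hlen]
  have hup : ∀ s, 1 ≤ s → s ≤ k → a s ≤ a k := fun s h1 h2 => ha s k h1 h2 le_rfl
  -- the alternating-sum functional
  set A : (ℝ → ℝ) → ℝ :=
    fun f => ∑ s ∈ Finset.range k, (-1 : ℝ) ^ s * ∫ t in (a s)..(a (s + 1)), f t with hA
  have hcont : Continuous (trigMomentCurve k) := by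
    apply continuous_pi
    intro i
    unfold trigMomentCurve
    split_ifs
    · exact continuous_const
    · fun_prop
    · fun_prop
  have hcomp : ∀ i : Fin (k + 1), A (fun t => trigMomentCurve k t i) = 0 := by
    intro i
    have h1 := congrFun hS i
    simp only [Finset.sum_apply, Pi.smul_apply, smul_eq_mul, Pi.zero_apply] at h1
    have key : ∀ x y : ℝ, (∫ t in x..y, trigMomentCurve k t i)
        = (∫ t in x..y, trigMomentCurve k t) i := by
      intro x y
      exact (ContinuousLinearMap.proj (R := ℝ) (φ := fun _ : Fin (k + 1) => ℝ)
        i).intervalIntegral_comp_comm (hcont.intervalIntegrable x y)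
    rw [hA]
    simp only [key]
    exact h1
  -- A vanishes on the generators
  have hgen : ∀ m : ℕ, m ≤ r →
      A (fun t => Real.cos (m * t)) = 0 ∧ A (fun t => Real.sin (m * t)) = 0 := by
    intro m hm
    constructor
    · rcases Nat.eq_zero_or_pos m with rfl | hm1
      · have e : (fun t => Real.cos (((0:ℕ):ℝ) * t)) = fun t => trigMomentCurve k t ⟨0, by omega⟩ := by
          funext t; simp [trigMomentCurve]
        rw [e]; exact hcomp _
      · have hi : 2 * m - 1 < k + 1 := by omega
        have e : (fun t => Real.cos ((m:ℝ) * t))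
            = fun t => trigMomentCurve k t ⟨2 * m - 1, hi⟩ := by
          funext t
          simp only [trigMomentCurve, Fin.val_mk]
          rw [if_neg (by omega), if_pos (by omega),
            show (2 * m - 1 + 1) / 2 = m from by omega]
        rw [e]; exact hcomp _
    · rcases Nat.eq_zero_or_pos m with rfl | hm1
      · have e : (fun t => Real.sin (((0:ℕ):ℝ) * t)) = fun _ => (0:ℝ) := by
          funext t; simp
        rw [e, hA]
        simp
      · have hi : 2 * m < k + 1 := by omega
        have e : (fun t => Real.sin ((m:ℝ) * t))
            = fun t => trigMomentCurve k t ⟨2 * m, hi⟩ := by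
          funext t
          simp only [trigMomentCurve, Fin.val_mk]
          rw [if_neg (by omega), if_neg (by omega),
            show (2 * m) / 2 = m from by omega]
        rw [e]; exact hcomp _
  -- A vanishes on T r
  have hvanish : ∀ f, f ∈ T r → Continuous f ∧ A f = 0 := by
    intro f hf
    induction hf using Submodule.span_induction with
    | mem g hg =>
      obtain ⟨m, hm, hg | hg⟩ := hg <;> subst hg
      · exact ⟨by fun_prop, (hgen m hm).1⟩
      · exact ⟨by fun_prop, (hgen m hm).2⟩
    | zero =>
      refine ⟨continuous_const, ?_⟩
      rw [hA]; simp
    | add x y hx hy ihx ihy =>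
      refine ⟨ihx.1.add ihy.1, ?_⟩
      have e : A (x + y) = A x + A y := by
        rw [hA]
        simp only
        rw [← Finset.sum_add_distrib]
        refine Finset.sum_congr rfl fun s _ => ?_
        simp only [Pi.add_apply]
        rw [intervalIntegral.integral_add (ihx.1.intervalIntegrable _ _)
          (ihy.1.intervalIntegrable _ _)]
        ring
      rw [e, ihx.2, ihy.2, add_zero]
    | smul c x hx ih =>
      refine ⟨ih.1.const_smul c, ?_⟩
      have e : A (c • x) = c * A x := by
        rw [hA]
        simp only
        rw [Finset.mul_sum]
        refine Finset.sum_congr rfl fun s _ => ?_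
        simp only [Pi.smul_apply, smul_eq_mul]
        rw [intervalIntegral.integral_const_mul]
        ring
      rw [e, ih.2, mul_zero]
  -- the positive trig polynomial
  set P : ℝ → ℝ := fun t => ∏ j ∈ Finset.range k, Real.sin ((t - a (j + 1)) / 2) with hP
  have hPmem : P ∈ T r := by
    rw [hP, hk]
    exact prod_sin_mem (fun j => a (j + 1)) r
  have hPcont : Continuous P := by
    rw [hP]
    exact continuous_finset_prod _ fun j _ => by fun_prop
  have hPzero : A P = 0 := (hvanish P hPmem).2
  -- sign analysis
  have hsplit : ∀ s, s ≤ k → ∀ t : ℝ, (-1:ℝ) ^ s * P t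
      = (∏ j ∈ Finset.range s, Real.sin ((t - a (j + 1)) / 2)) *
        ∏ j ∈ Finset.Ico s k, -Real.sin ((t - a (j + 1)) / 2) := by
    intro s hs t
    have h1 : P t = (∏ j ∈ Finset.range s, Real.sin ((t - a (j + 1)) / 2)) *
        ∏ j ∈ Finset.Ico s k, Real.sin ((t - a (j + 1)) / 2) :=
      (Finset.prod_range_mul_prod_Ico _ hs).symm
    have h2 : ∏ j ∈ Finset.Ico s k, -Real.sin ((t - a (j + 1)) / 2)
        = (-1:ℝ) ^ (k - s) * ∏ j ∈ Finset.Ico s k, Real.sin ((t - a (j + 1)) / 2) := by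
      have : ∀ j ∈ Finset.Ico s k, -Real.sin ((t - a (j + 1)) / 2)
          = (-1 : ℝ) * Real.sin ((t - a (j + 1)) / 2) := by intro j _; ring
      rw [Finset.prod_congr rfl this, Finset.prod_mul_distrib, Finset.prod_const,
        Nat.card_Ico]
    have h3 : (-1:ℝ) ^ s * (-1:ℝ) ^ (k - s) = 1 := by
      rw [← pow_add, show s + (k - s) = 2 * r by omega, pow_mul]
      norm_num
    have h4 : (-1:ℝ) ^ s * (-1:ℝ) ^ s = 1 := by
      rw [← pow_add, ← two_mul, pow_mul]; norm_num
    have h5 : (-1:ℝ) ^ (k - s) = (-1:ℝ) ^ s := by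
      calc (-1:ℝ) ^ (k - s) = ((-1:ℝ) ^ s * (-1:ℝ) ^ s) * (-1:ℝ) ^ (k - s) := by rw [h4]; ring
        _ = (-1:ℝ) ^ s * ((-1:ℝ) ^ s * (-1:ℝ) ^ (k - s)) := by ring
        _ = (-1:ℝ) ^ s := by rw [h3]; ring
    rw [h1, h2, h5]
    ring
  have hsign : ∀ s, s < k → ∀ t, a s ≤ t → t ≤ a (s + 1) → 0 ≤ (-1:ℝ) ^ s * P t := by
    intro s hs t ht1 ht2
    rw [hsplit s hs.le t]
    apply mul_nonneg
    · apply Finset.prod_nonneg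
      intro j hj
      rw [Finset.mem_range] at hj
      apply Real.sin_nonneg_of_nonneg_of_le_pi
      · have := ha (j + 1) s (by omega) (by omega) (by omega)
        linarith
      · have h1 := hup (s + 1) (by omega) (by omega)
        have h2 := ha 1 (j + 1) le_rfl (by omega) (by omega)
        linarith
    · apply Finset.prod_nonneg
      intro j hj
      rw [Finset.mem_Ico] at hj
      have e : -Real.sin ((t - a (j + 1)) / 2) = Real.sin ((a (j + 1) - t) / 2) := by
        rw [← Real.sin_neg]; congr 1; ring
      rw [e]
      apply Real.sin_nonneg_of_nonneg_of_le_pi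
      · have := ha (s + 1) (j + 1) (by omega) (by omega) (by omega)
        linarith
      · have h1 := hup (j + 1) (by omega) (by omega)
        have h2 := hlow s (by omega)
        linarith
  have hsignlt : ∀ s, s < k → ∀ t, a s < t → t < a (s + 1) → 0 < (-1:ℝ) ^ s * P t := by
    intro s hs t ht1 ht2
    rw [hsplit s hs.le t]
    apply mul_pos
    · apply Finset.prod_pos
      intro j hj
      rw [Finset.mem_range] at hj
      apply Real.sin_pos_of_pos_of_lt_pi
      · have := ha (j + 1) s (by omega) (by omega) (by omega)
        linarith
      · have h1 := hup (s + 1) (by omega) (by omega)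
        have h2 := ha 1 (j + 1) le_rfl (by omega) (by omega)
        linarith
    · apply Finset.prod_pos
      intro j hj
      rw [Finset.mem_Ico] at hj
      have e : -Real.sin ((t - a (j + 1)) / 2) = Real.sin ((a (j + 1) - t) / 2) := by
        rw [← Real.sin_neg]; congr 1; ring
      rw [e]
      apply Real.sin_pos_of_pos_of_lt_pi
      · have := ha (s + 1) (j + 1) (by omega) (by omega) (by omega)
        linarith
      · have h1 := hup (j + 1) (by omega) (by omega)
        have h2 := hlow s (by omega)
        linarith
  -- some interval is nondegenerate
  have hex : ∃ s, s < k ∧ a s < a (s + 1) := by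
    by_contra hco
    push_neg at hco
    have hall : ∀ n, n ≤ k → a n ≤ a 0 := by
      intro n hn
      induction n with
      | zero => exact le_rfl
      | succ n ih => exact (hco n (by omega)).trans (ih (by omega))
    have h1 := hall k le_rfl
    rw [h0] at h1
    linarith
  obtain ⟨s0, hs0k, hs0⟩ := hex
  -- A P > 0
  have hpos : 0 < A P := by
    rw [hA]
    simp only
    have hterm : ∀ s ∈ Finset.range k, (0:ℝ) ≤ (-1:ℝ) ^ s * ∫ t in (a s)..(a (s + 1)), P t := by
      intro s hs
      rw [Finset.mem_range] at hs
      rw [← intervalIntegral.integral_const_mul]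
      exact intervalIntegral.integral_nonneg (hstep s hs) fun u hu => hsign s hs u hu.1 hu.2
    refine Finset.sum_pos' hterm ⟨s0, Finset.mem_range.2 hs0k, ?_⟩
    rw [← intervalIntegral.integral_const_mul]
    exact intervalIntegral.intervalIntegral_pos_of_pos_on
      ((continuous_const.mul hPcont).intervalIntegrable _ _)
      (fun u hu => hsignlt s0 hs0k u hu.1 hu.2) hs0
  exact hpos.ne' hPzero
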